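/- If G₁ and G₂ are nontrivial finite groups of coprime orders, each admitting a DRR (digraphical regular representation), then G₁ × G₂ is not DRR-detecting: there exists S ⊆ G₁ × G₂ with Aut(G₁×G₂)_S = 1 but Aut(Cay(G₁×G₂, S)) strictly larger than the regular group. -/

import Mathlib

open scoped Classical in
private noncomputable def drrSet {G : Type*} [Group G] (T : Set G) : Set G :=
  if (T \ {1}).Nonempty then T \ {1} else Tᶜ \ {1}

private lemma drrSet_not_one {G : Type*} [Group G] (T : Set G) : (1:G) ∉ drrSet T := by
  unfold drrSet; split <;> simp

private lemma drrSet_nonempty {G : Type*} [Group G] [Nontrivial G] (T : Set G) :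
    (drrSet T).Nonempty := by
  unfold drrSet; split
  · assumption
  · rename_i h
    rw [Set.not_nonempty_iff_eq_empty] at h
    obtain ⟨g, hg⟩ := exists_ne (1:G)
    refine ⟨g, fun hgT => ?_, hg⟩
    exact absurd (Set.eq_empty_iff_forall_notMem.mp h g) (by simp [hgT, hg])

private lemma drrSet_transfer {G : Type*} [Group G] (T : Set G) (f : Equiv.Perm G)
    (h : ∀ x y : G, x * y⁻¹ ∈ drrSet T ↔ f x * (f y)⁻¹ ∈ drrSet T) :
    ∀ x y : G, x * y⁻¹ ∈ T ↔ f x * (f y)⁻¹ ∈ T := by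
  have hone : ∀ x y : G, x * y⁻¹ = 1 ↔ f x * (f y)⁻¹ = 1 := fun x y => by
    rw [mul_inv_eq_one, mul_inv_eq_one, f.injective.eq_iff]
  intro x y
  rcases eq_or_ne (x * y⁻¹) 1 with h1 | h1
  · rw [h1, (hone x y).mp h1]
  · have h2 : f x * (f y)⁻¹ ≠ 1 := fun hc => h1 ((hone x y).mpr hc)
    have hxy := h x y
    unfold drrSet at hxy
    split at hxy
    · simp only [Set.mem_diff, Set.mem_singleton_iff] at hxy
      exact ⟨fun ht => (hxy.mp ⟨ht, h1⟩).1, fun ht => (hxy.mpr ⟨ht, h2⟩).1⟩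
    · simp only [Set.mem_diff, Set.mem_compl_iff, Set.mem_singleton_iff] at hxy
      exact not_iff_not.mp
        ⟨fun ht => (hxy.mp ⟨ht, h1⟩).1, fun ht => (hxy.mpr ⟨ht, h2⟩).1⟩
set_option linter.unnecessarySimpa false in
/-- Morris–Morris–Verret, Theorem 1.9: if `G₁` and `G₂` are nontrivial
groups of coprime orders each admitting a DRR, then `G₁ × G₂` is not DRR-detecting. -/
theorem stmt16 {G₁ G₂ : Type*} [Group G₁] [Group G₂] [Finite G₁] [Finite G₂]
    [Nontrivial G₁] [Nontrivial G₂]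
    (hcop : Nat.Coprime (Nat.card G₁) (Nat.card G₂))
    (hd1 : ∃ T : Set G₁, ∀ f : Equiv.Perm G₁,
      (∀ x y : G₁, x * y⁻¹ ∈ T ↔ f x * (f y)⁻¹ ∈ T) → ∃ r : G₁, ∀ v, f v = v * r)
    (hd2 : ∃ T : Set G₂, ∀ f : Equiv.Perm G₂,
      (∀ x y : G₂, x * y⁻¹ ∈ T ↔ f x * (f y)⁻¹ ∈ T) → ∃ r : G₂, ∀ v, f v = v * r) :
    ∃ S : Set (G₁ × G₂),
      (∀ φ : MulAut (G₁ × G₂), φ '' S = S → φ = 1) ∧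
      ∃ f : Equiv.Perm (G₁ × G₂),
        (∀ x y : G₁ × G₂, x * y⁻¹ ∈ S ↔ f x * (f y)⁻¹ ∈ S) ∧
        ¬ ∃ r : G₁ × G₂, ∀ v, f v = v * r := by
  obtain ⟨T₁, hT₁⟩ := hd1
  obtain ⟨T₂, hT₂⟩ := hd2
  set S₁ : Set G₁ := drrSet T₁ with hS₁def
  set S₂ : Set G₂ := drrSet T₂ with hS₂def
  have hS₁one : (1:G₁) ∉ S₁ := drrSet_not_one T₁
  have hS₂one : (1:G₂) ∉ S₂ := drrSet_not_one T₂
  -- the connection set: lexicographic product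
  refine ⟨{p : G₁ × G₂ | p.1 ∈ S₁ ∨ (p.1 = 1 ∧ p.2 ∈ S₂)}, ?_, ?_⟩
  · -- trivial automorphism stabilizer
    intro φ hφ
    -- coprimality: φ preserves the two factors
    have key2 : ∀ a : G₁, (φ (a, 1)).2 = 1 := by
      intro a
      rw [← orderOf_eq_one_iff]
      have hdA : orderOf (φ (a, 1)).2 ∣ Nat.card G₂ := orderOf_dvd_natCard _
      have hdB : orderOf (φ (a, 1)).2 ∣ Nat.card G₁ := by
        have h1 : orderOf (φ (a, 1)).2 ∣ orderOf (φ (a, 1)) := by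
          rw [Prod.orderOf]; exact Nat.dvd_lcm_right _ _
        have h2 : orderOf (φ (a, 1)) = orderOf ((a, 1) : G₁ × G₂) :=
          orderOf_injective φ.toMonoidHom φ.injective _
        have h3 : orderOf ((a, 1) : G₁ × G₂) = orderOf a := by
          rw [Prod.orderOf]; simp
        rw [h2, h3] at h1
        exact h1.trans (orderOf_dvd_natCard a)
      have := Nat.dvd_gcd hdB hdA
      rwa [Nat.Coprime.gcd_eq_one hcop, Nat.dvd_one] at this
    have key1 : ∀ b : G₂, (φ (1, b)).1 = 1 := by
      intro b
      rw [← orderOf_eq_one_iff]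
      have hdA : orderOf (φ (1, b)).1 ∣ Nat.card G₁ := orderOf_dvd_natCard _
      have hdB : orderOf (φ (1, b)).1 ∣ Nat.card G₂ := by
        have h1 : orderOf (φ (1, b)).1 ∣ orderOf (φ (1, b)) := by
          rw [Prod.orderOf]; exact Nat.dvd_lcm_left _ _
        have h2 : orderOf (φ (1, b)) = orderOf ((1, b) : G₁ × G₂) :=
          orderOf_injective φ.toMonoidHom φ.injective _
        have h3 : orderOf ((1, b) : G₁ × G₂) = orderOf b := by
          rw [Prod.orderOf]; simp
        rw [h2, h3] at h1
        exact h1.trans (orderOf_dvd_natCard b)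
      have := Nat.dvd_gcd hdB hdA
      rwa [Nat.Coprime.gcd_eq_one hcop.symm, Nat.dvd_one] at this
    set α : G₁ → G₁ := fun a => (φ (a, 1)).1 with hα
    set β : G₂ → G₂ := fun b => (φ (1, b)).2 with hβ
    have hφa : ∀ a : G₁, φ (a, 1) = (α a, 1) := fun a => Prod.ext rfl (key2 a)
    have hφb : ∀ b : G₂, φ (1, b) = (1, β b) := fun b => Prod.ext (key1 b) rfl
    have hφab : ∀ p : G₁ × G₂, φ p = (α p.1, β p.2) := by
      intro p
      have : φ ((p.1, 1) * (1, p.2)) = φ (p.1, 1) * φ (1, p.2) := map_mul φ _ _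
      rw [Prod.mk_mul_mk, mul_one, one_mul] at this
      rw [this, hφa, hφb, Prod.mk_mul_mk, mul_one, one_mul]
    have hαinj : Function.Injective α := by
      intro a a' h
      have : φ (a, 1) = φ (a', 1) := by rw [hφa, hφa, h]
      exact (Prod.ext_iff.mp (φ.injective this)).1
    have hβinj : Function.Injective β := by
      intro b b' h
      have : φ (1, b) = φ (1, b') := by rw [hφb, hφb, h]
      exact (Prod.ext_iff.mp (φ.injective this)).2
    have hα1 : α 1 = 1 := by
      have : φ ((1 : G₁ × G₂)) = 1 := map_one φ
      exact congrArg Prod.fst this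
    have hβ1 : β 1 = 1 := by
      have : φ ((1 : G₁ × G₂)) = 1 := map_one φ
      exact congrArg Prod.snd this
    have hαmul : ∀ x y : G₁, α (x * y⁻¹) = α x * (α y)⁻¹ := by
      intro x y
      have h : φ ((x, 1) * ((y, 1) : G₁ × G₂)⁻¹) = φ (x, 1) * (φ (y, 1))⁻¹ := by
        rw [map_mul, map_inv]
      simp only [Prod.inv_mk, Prod.mk_mul_mk, inv_one, mul_one, one_mul, hφa] at h
      simpa [hα] using congrArg Prod.fst h
    have hβmul : ∀ x y : G₂, β (x * y⁻¹) = β x * (β y)⁻¹ := by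
      intro x y
      have h : φ ((1, x) * ((1, y) : G₁ × G₂)⁻¹) = φ (1, x) * (φ (1, y))⁻¹ := by
        rw [map_mul, map_inv]
      simp only [Prod.inv_mk, Prod.mk_mul_mk, inv_one, mul_one, one_mul, hφb] at h
      simpa [hβ] using congrArg Prod.snd h
    -- invariance of S₁ and S₂
    have hmap1 : ∀ a ∈ S₁, α a ∈ S₁ := by
      intro a ha
      have hmem : ((a, 1) : G₁ × G₂) ∈ {p : G₁ × G₂ | p.1 ∈ S₁ ∨ (p.1 = 1 ∧ p.2 ∈ S₂)} :=
        Or.inl ha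
      have : φ (a, 1) ∈ {p : G₁ × G₂ | p.1 ∈ S₁ ∨ (p.1 = 1 ∧ p.2 ∈ S₂)} := by
        rw [← hφ]; exact Set.mem_image_of_mem _ hmem
      rw [hφa] at this
      rcases this with h | ⟨h, _⟩
      · exact h
      · exact absurd (hαinj (h.trans hα1.symm)) (fun hc => hS₁one (hc ▸ ha))
    have hmap2 : ∀ b ∈ S₂, β b ∈ S₂ := by
      intro b hb
      have hmem : ((1, b) : G₁ × G₂) ∈ {p : G₁ × G₂ | p.1 ∈ S₁ ∨ (p.1 = 1 ∧ p.2 ∈ S₂)} :=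
        Or.inr ⟨rfl, hb⟩
      have : φ (1, b) ∈ {p : G₁ × G₂ | p.1 ∈ S₁ ∨ (p.1 = 1 ∧ p.2 ∈ S₂)} := by
        rw [← hφ]; exact Set.mem_image_of_mem _ hmem
      rw [hφb] at this
      rcases this with h | ⟨_, h⟩
      · exact absurd h hS₁one
      · exact h
    have himg1 : α '' S₁ = S₁ := by
      apply Set.eq_of_subset_of_ncard_le
      · rintro _ ⟨a, ha, rfl⟩; exact hmap1 a ha
      · rw [Set.ncard_image_of_injective _ hαinj]
      · exact Set.toFinite _
    have himg2 : β '' S₂ = S₂ := by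
      apply Set.eq_of_subset_of_ncard_le
      · rintro _ ⟨b, hb, rfl⟩; exact hmap2 b hb
      · rw [Set.ncard_image_of_injective _ hβinj]
      · exact Set.toFinite _
    have hiff1 : ∀ a : G₁, a ∈ S₁ ↔ α a ∈ S₁ := by
      intro a
      refine ⟨hmap1 a, fun h => ?_⟩
      rw [← himg1] at h
      obtain ⟨a', ha', he⟩ := h
      exact hαinj he ▸ ha'
    have hiff2 : ∀ b : G₂, b ∈ S₂ ↔ β b ∈ S₂ := by
      intro b
      refine ⟨hmap2 b, fun h => ?_⟩
      rw [← himg2] at h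
      obtain ⟨b', hb', he⟩ := h
      exact hβinj he ▸ hb'
    -- build permutations and apply the DRR hypotheses
    have hαbij : Function.Bijective α := Finite.injective_iff_bijective.mp hαinj
    have hβbij : Function.Bijective β := Finite.injective_iff_bijective.mp hβinj
    have hαid : ∀ a : G₁, α a = a := by
      obtain ⟨r, hr⟩ := hT₁ (Equiv.ofBijective α hαbij)
        (drrSet_transfer T₁ (Equiv.ofBijective α hαbij) (by
          intro x y
          show x * y⁻¹ ∈ S₁ ↔ α x * (α y)⁻¹ ∈ S₁
          rw [← hαmul]; exact hiff1 _))
      have hr1 : r = 1 := by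
        have := hr 1
        simp only [Equiv.ofBijective_apply, one_mul] at this
        rw [hα1] at this; exact this.symm
      intro a
      have := hr a
      simp only [Equiv.ofBijective_apply] at this
      rw [this, hr1, mul_one]
    have hβid : ∀ b : G₂, β b = b := by
      obtain ⟨r, hr⟩ := hT₂ (Equiv.ofBijective β hβbij)
        (drrSet_transfer T₂ (Equiv.ofBijective β hβbij) (by
          intro x y
          show x * y⁻¹ ∈ S₂ ↔ β x * (β y)⁻¹ ∈ S₂
          rw [← hβmul]; exact hiff2 _))
      have hr1 : r = 1 := by
        have := hr 1
        simp only [Equiv.ofBijective_apply, one_mul] at this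
        rw [hβ1] at this; exact this.symm
      intro b
      have := hr b
      simp only [Equiv.ofBijective_apply] at this
      rw [this, hr1, mul_one]
    refine MulEquiv.ext fun p => ?_
    show φ p = p
    rw [hφab p, hαid, hβid]
  · -- a graph automorphism that is not a right translation
    obtain ⟨a₀, ha₀⟩ := exists_ne (1:G₁)
    obtain ⟨r, hrne⟩ := exists_ne (1:G₂)
    classical
    set q : G₁ × G₂ → G₁ × G₂ := fun p => if p.1 = a₀ then (p.1, p.2 * r) else p with hq
    have hq1 : ∀ p, (q p).1 = p.1 := by
      intro p; by_cases h : p.1 = a₀ <;> simp [hq, h]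
    have hq2 : ∀ x y : G₁ × G₂, x.1 = y.1 → (q x).2 * ((q y).2)⁻¹ = x.2 * y.2⁻¹ := by
      intro x y hxy
      by_cases h : x.1 = a₀
      · have h' : y.1 = a₀ := hxy ▸ h
        simp [hq, h, h', mul_inv_rev, mul_assoc]
      · have h' : ¬ y.1 = a₀ := fun hc => h (hxy.symm ▸ hc)
        simp [hq, h, h']
    refine ⟨⟨q, fun p => if p.1 = a₀ then (p.1, p.2 * r⁻¹) else p, ?_, ?_⟩, ?_, ?_⟩
    · rintro ⟨p1, p2⟩
      by_cases h : p1 = a₀ <;> simp [hq, h, mul_assoc]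
    · rintro ⟨p1, p2⟩
      by_cases h : p1 = a₀ <;> simp [hq, h, mul_assoc]
    · intro x y
      show x * y⁻¹ ∈ _ ↔ q x * (q y)⁻¹ ∈ _
      have e1 : (q x).1 * ((q y).1)⁻¹ = x.1 * y.1⁻¹ := by rw [hq1, hq1]
      simp only [Set.mem_setOf_eq, Prod.fst_mul, Prod.fst_inv, Prod.snd_mul, Prod.snd_inv, e1]
      constructor
      · rintro (h | ⟨h, hs⟩)
        · exact Or.inl h
        · exact Or.inr ⟨h, by
            rw [hq2 x y (by rwa [mul_inv_eq_one] at h)]; exact hs⟩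
      · rintro (h | ⟨h, hs⟩)
        · exact Or.inl h
        · exact Or.inr ⟨h, by
            rwa [hq2 x y (by rwa [mul_inv_eq_one] at h)] at hs⟩
    · rintro ⟨r', hr'⟩
      have hq11 : q (1, 1) = ((1 : G₁), (1 : G₂)) := by
        simp only [hq]; exact if_neg (Ne.symm ha₀)
      have h1 := hr' (1, 1)
      simp only [Equiv.coe_fn_mk] at h1
      rw [hq11, show ((1:G₁), (1:G₂)) = (1 : G₁ × G₂) from rfl, one_mul] at h1
      have h2 := hr' (a₀, 1)
      simp only [Equiv.coe_fn_mk] at h2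
      have hqa : q (a₀, 1) = (a₀, r) := by
        simp [hq]
      rw [hqa, ← h1, mul_one] at h2
      exact hrne (Prod.ext_iff.mp h2).2
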